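/- Among all probability distributions P on subsets of {1,…,N} supported on k-element subsets, satisfying the marginal constraints Σ_{A : i∈A, |A|=k} P(A) = f_i for each i (where Σ_i f_i = k and the constraints are feasible), the maximum-entropy distribution has the form P*(A) = (1/Z)·exp(Σ_{i∈A} λ_i) for some real numbers λ_1,…,λ_N, where Z is the normalizing constant over k-subsets. -/

import Mathlib

open Classical

/- STATEMENT 7: Among all probability distributions on subsets of `{1,…,N}`
supported on `k`-element subsets, with inclusion probabilities `f_i`
(`Σ_i f_i = k`, feasible), the maximum-entropy distribution has the Gibbs form
`P*(A) = exp(Σ_{i∈A} λ_i) / Z`. -/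

/-- A distribution on subsets of `Fin N`, supported on `k`-subsets, with
inclusion probabilities `f`. -/
def FeasibleDist (N k : ℕ) (f : Fin N → ℝ) (P : Finset (Fin N) → ℝ) : Prop :=
  (∀ A, 0 ≤ P A) ∧ (∑ A : Finset (Fin N), P A = 1) ∧
  (∀ A : Finset (Fin N), A.card ≠ k → P A = 0) ∧
  (∀ i : Fin N, ∑ A : Finset (Fin N), (if i ∈ A ∧ A.card = k then P A else 0) = f i)

/-- Shannon entropy of a distribution on subsets of `Fin N`
(with the convention `0 · log 0 = 0`). -/
noncomputable def subsetEntropy (N : ℕ) (P : Finset (Fin N) → ℝ) : ℝ :=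
  -∑ A : Finset (Fin N), P A * Real.log (P A)

/-- Base case: 0/1 marginals are realized by a point mass. -/
lemma feasible_of_zero_one (N k : ℕ) (g : Fin N → ℝ)
    (h01 : ∀ i, g i = 0 ∨ g i = 1) (hsum : ∑ i, g i = (k : ℝ)) :
    ∃ R, FeasibleDist N k g R := by
  set S : Finset (Fin N) := Finset.univ.filter (fun i => g i = 1) with hS
  have hgS : ∀ i, g i = if i ∈ S then (1:ℝ) else 0 := by
    intro i
    by_cases h : i ∈ S
    · rw [if_pos h]
      exact (Finset.mem_filter.1 h).2
    · rw [if_neg h]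
      rcases h01 i with h0 | h1
      · exact h0
      · exact absurd (by simp [hS, h1]) h
  have hcardS : S.card = k := by
    have : ∑ i, g i = (S.card : ℝ) := by
      rw [Finset.sum_congr rfl (fun i _ => hgS i)]
      simp
    rw [hsum] at this
    exact_mod_cast this.symm
  refine ⟨fun A => if A = S then 1 else 0, ?_, ?_, ?_, ?_⟩
  · intro A; positivity
  · simp
  · intro A hA
    have : A ≠ S := fun h => hA (h ▸ hcardS)
    simp [this]
  · intro i
    rw [Finset.sum_eq_single S]
    · rw [hgS i]
      by_cases h : i ∈ S <;> simp [h, hcardS]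
    · intro A _ hA
      simp [hA]
    · simp

/-- Convex combination of feasible distributions for convex combo of marginals. -/
lemma feasible_combo (N k : ℕ) (g₁ g₂ : Fin N → ℝ) (c : ℝ) (hc0 : 0 ≤ c) (hc1 : c ≤ 1)
    (R₁ R₂ : Finset (Fin N) → ℝ) (h₁ : FeasibleDist N k g₁ R₁) (h₂ : FeasibleDist N k g₂ R₂) :
    FeasibleDist N k (fun i => c * g₁ i + (1 - c) * g₂ i)
      (fun A => c * R₁ A + (1 - c) * R₂ A) := by
  obtain ⟨p1, s1, z1, m1⟩ := h₁
  obtain ⟨p2, s2, z2, m2⟩ := h₂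
  refine ⟨fun A => by dsimp only; nlinarith [p1 A, p2 A], ?_,
    fun A hA => by dsimp only; rw [z1 A hA, z2 A hA]; ring, ?_⟩
  · rw [Finset.sum_add_distrib, ← Finset.mul_sum, ← Finset.mul_sum, s1, s2]; ring
  · intro i
    have : ∀ A : Finset (Fin N),
        (if i ∈ A ∧ A.card = k then c * R₁ A + (1 - c) * R₂ A else 0)
        = c * (if i ∈ A ∧ A.card = k then R₁ A else 0)
          + (1 - c) * (if i ∈ A ∧ A.card = k then R₂ A else 0) := by
      intro A; by_cases h : i ∈ A ∧ A.card = k <;> simp [h]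
    rw [Finset.sum_congr rfl (fun A _ => this A), Finset.sum_add_distrib,
      ← Finset.mul_sum, ← Finset.mul_sum, m1, m2]

/-- Any point of the hypersimplex is realizable as a marginal vector. -/
lemma hypersimplex_feasible (N k : ℕ) :
    ∀ (n : ℕ) (g : Fin N → ℝ),
      (Finset.univ.filter (fun i => g i ≠ 0 ∧ g i ≠ 1)).card ≤ n →
      (∀ i, 0 ≤ g i ∧ g i ≤ 1) → (∑ i, g i = (k : ℝ)) →
      ∃ R, FeasibleDist N k g R := by
  intro n
  induction n with
  | zero =>
    intro g hcard hb hsum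
    refine feasible_of_zero_one N k g (fun i => ?_) hsum
    by_contra hne
    push_neg at hne
    have : i ∈ Finset.univ.filter (fun i => g i ≠ 0 ∧ g i ≠ 1) := by
      simp [hne.1, hne.2]
    have := Finset.card_pos.2 ⟨i, this⟩
    omega
  | succ n ih =>
    intro g hcard hb hsum
    set S := Finset.univ.filter (fun i => g i ≠ 0 ∧ g i ≠ 1) with hSdef
    by_cases hle : S.card ≤ n
    · exact ih g hle hb hsum
    -- S is nonempty
    have hSne : S.Nonempty := Finset.card_pos.1 (by omega)
    obtain ⟨i, hiS⟩ := hSne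
    have hgi : 0 < g i ∧ g i < 1 := by
      have := Finset.mem_filter.1 hiS
      exact ⟨lt_of_le_of_ne (hb i).1 (Ne.symm this.2.1), lt_of_le_of_ne (hb i).2 this.2.2⟩
    -- there is a second fractional coordinate
    have hj : ∃ j ∈ S, j ≠ i := by
      by_contra hno
      push_neg at hno
      -- then all other coordinates are 0/1, and g i = k - m for a natural m
      set T := (Finset.univ.erase i).filter (fun j => g j = 1) with hT
      have hsum2 : ∑ j ∈ Finset.univ.erase i, g j = (T.card : ℝ) := by
        rw [← Finset.sum_filter_add_sum_filter_not (Finset.univ.erase i) (fun j => g j = 1)]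
        have h1 : ∑ j ∈ T, g j = (T.card : ℝ) := by
          rw [Finset.sum_congr rfl (fun j hj => (Finset.mem_filter.1 hj).2)]; simp; rfl
        have h2 : ∑ j ∈ (Finset.univ.erase i).filter (fun j => ¬ g j = 1), g j = 0 := by
          apply Finset.sum_eq_zero
          intro j hjm
          have hjm' := Finset.mem_filter.1 hjm
          have hji : j ≠ i := Finset.ne_of_mem_erase hjm'.1
          by_contra hne0
          exact hjm'.2 (by_contra fun h1' => hji (hno j (by simp [hSdef, hne0, h1'])))
        rw [h1, h2]; ring
      have : g i = (k : ℝ) - T.card := by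
        have := Finset.add_sum_erase Finset.univ g (Finset.mem_univ i)
        rw [hsum2] at this
        rw [← hsum, ← this]; ring
      rcases le_or_gt (k : ℝ) (T.card : ℝ) with h | h
      · nlinarith [hgi.1]
      · have : (T.card : ℝ) + 1 ≤ (k : ℝ) := by exact_mod_cast Nat.cast_lt.1 h
        nlinarith [hgi.2]
    obtain ⟨j, hjS, hji⟩ := hj
    have hgj : 0 < g j ∧ g j < 1 := by
      have := Finset.mem_filter.1 hjS
      exact ⟨lt_of_le_of_ne (hb j).1 (Ne.symm this.2.1), lt_of_le_of_ne (hb j).2 this.2.2⟩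
    set a := min (1 - g i) (g j) with ha
    set b := min (g i) (1 - g j) with hbdef
    have ha0 : 0 < a := lt_min (by linarith [hgi.2]) hgj.1
    have hb0 : 0 < b := lt_min hgi.1 (by linarith [hgj.2])
    set gp : Fin N → ℝ := fun t => if t = i then g i + a else if t = j then g j - a else g t with hgp
    set gm : Fin N → ℝ := fun t => if t = i then g i - b else if t = j then g j + b else g t with hgm
    have key : ∀ (h : Fin N → ℝ) (d : ℝ),
        (∀ t, h t = if t = i then g i + d else if t = j then g j - d else g t) →
        ∑ t, h t = (k : ℝ) := by
      intro h d hd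
      have : ∑ t, h t = ∑ t, g t + (h i - g i) + (h j - g j) := by
        have hij : ∀ t, h t - g t = 0 ∨ t = i ∨ t = j := by
          intro t
          rcases eq_or_ne t i with rfl | hti
          · tauto
          rcases eq_or_ne t j with rfl | htj
          · tauto
          · left; rw [hd t, if_neg hti, if_neg htj]; ring
        have : ∑ t, (h t - g t) = (h i - g i) + (h j - g j) := by
          rw [← Finset.sum_subset (Finset.insert_subset_iff.2
            ⟨Finset.mem_univ i, Finset.singleton_subset_iff.2 (Finset.mem_univ j)⟩)]
          · rw [Finset.sum_insert (by simp [hji.symm])]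
            simp
          · intro t _ ht
            rcases hij t with h0 | rfl | rfl
            · exact h0
            · exact absurd (Finset.mem_insert_self _ _) ht
            · exact absurd (by simp) ht
        rw [Finset.sum_sub_distrib] at this
        linarith
      rw [this, hsum, hd i, hd j, if_pos rfl, if_neg hji, if_pos rfl]
      ring
    have hgpsum : ∑ t, gp t = (k : ℝ) := key gp a (fun t => rfl)
    have hgmsum : ∑ t, gm t = (k : ℝ) := key gm (-b) (by
      intro t
      rcases eq_or_ne t i with rfl | hti
      · have h' : gm t = g t - b := by rw [hgm]; beta_reduce; rw [if_pos rfl]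
        rw [h', if_pos rfl]; ring
      rcases eq_or_ne t j with rfl | htj
      · have h' : gm t = g t + b := by rw [hgm]; beta_reduce; rw [if_neg hti, if_pos rfl]
        rw [h', if_neg hti, if_pos rfl]; ring
      · have h' : gm t = g t := by rw [hgm]; beta_reduce; rw [if_neg hti, if_neg htj]
        rw [h', if_neg hti, if_neg htj])
    -- bounds
    have hal : a ≤ 1 - g i := min_le_left _ _
    have har : a ≤ g j := min_le_right _ _
    have hbl : b ≤ g i := min_le_left _ _
    have hbr : b ≤ 1 - g j := min_le_right _ _
    have hgpb : ∀ t, 0 ≤ gp t ∧ gp t ≤ 1 := by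
      intro t
      rcases eq_or_ne t i with rfl | hti
      · have h' : gp t = g t + a := by rw [hgp]; beta_reduce; rw [if_pos rfl]
        rw [h']
        exact ⟨by linarith [hgi.1, ha0.le], by linarith⟩
      rcases eq_or_ne t j with rfl | htj
      · have h' : gp t = g t - a := by rw [hgp]; beta_reduce; rw [if_neg hti, if_pos rfl]
        rw [h']
        exact ⟨by linarith, by linarith [hgj.2, ha0.le]⟩
      · have h' : gp t = g t := by rw [hgp]; beta_reduce; rw [if_neg hti, if_neg htj]
        rw [h']; exact hb t
    have hgmb : ∀ t, 0 ≤ gm t ∧ gm t ≤ 1 := by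
      intro t
      rcases eq_or_ne t i with rfl | hti
      · have h' : gm t = g t - b := by rw [hgm]; beta_reduce; rw [if_pos rfl]
        rw [h']
        exact ⟨by linarith, by linarith [hgi.2, hb0.le]⟩
      rcases eq_or_ne t j with rfl | htj
      · have h' : gm t = g t + b := by rw [hgm]; beta_reduce; rw [if_neg hti, if_pos rfl]
        rw [h']
        exact ⟨by linarith [hgj.1, hb0.le], by linarith⟩
      · have h' : gm t = g t := by rw [hgm]; beta_reduce; rw [if_neg hti, if_neg htj]
        rw [h']; exact hb t
    -- fractional-coordinate counts decrease
    have hfrac : ∀ (h : Fin N → ℝ), (∀ t, t ≠ i → t ≠ j → h t = g t) →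
        (h i = 0 ∨ h i = 1 ∨ h j = 0 ∨ h j = 1) →
        (Finset.univ.filter (fun t => h t ≠ 0 ∧ h t ≠ 1)).card ≤ n := by
      intro h hout hex
      have hsub : Finset.univ.filter (fun t => h t ≠ 0 ∧ h t ≠ 1) ⊂ S := by
        constructor
        · intro t ht
          have ht' := (Finset.mem_filter.1 ht).2
          rcases eq_or_ne t i with rfl | hti
          · exact hiS
          rcases eq_or_ne t j with rfl | htj
          · exact hjS
          · rw [hout t hti htj] at ht'
            simp [hSdef, ht'.1, ht'.2]
        · intro hsup
          rcases hex with h0 | h0 | h0 | h0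
          · have := (Finset.mem_filter.1 (hsup hiS)).2; exact this.1 h0
          · have := (Finset.mem_filter.1 (hsup hiS)).2; exact this.2 h0
          · have := (Finset.mem_filter.1 (hsup hjS)).2; exact this.1 h0
          · have := (Finset.mem_filter.1 (hsup hjS)).2; exact this.2 h0
      have := Finset.card_lt_card hsub
      omega
    have hgpcard : (Finset.univ.filter (fun t => gp t ≠ 0 ∧ gp t ≠ 1)).card ≤ n := by
      apply hfrac gp (fun t hti htj => by rw [hgp]; beta_reduce; rw [if_neg hti, if_neg htj])
      rcases min_cases (1 - g i) (g j) with ⟨h1, _⟩ | ⟨h1, _⟩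
      · right; left
        have h' : gp i = g i + a := by rw [hgp]; beta_reduce; rw [if_pos rfl]
        rw [h', ha, h1]; ring
      · right; right; left
        have h' : gp j = g j - a := by rw [hgp]; beta_reduce; rw [if_neg hji, if_pos rfl]
        rw [h', ha, h1]; ring
    have hgmcard : (Finset.univ.filter (fun t => gm t ≠ 0 ∧ gm t ≠ 1)).card ≤ n := by
      apply hfrac gm (fun t hti htj => by rw [hgm]; beta_reduce; rw [if_neg hti, if_neg htj])
      rcases min_cases (g i) (1 - g j) with ⟨h1, _⟩ | ⟨h1, _⟩
      · left
        have h' : gm i = g i - b := by rw [hgm]; beta_reduce; rw [if_pos rfl]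
        rw [h', hbdef, h1]; ring
      · right; right; right
        have h' : gm j = g j + b := by rw [hgm]; beta_reduce; rw [if_neg hji, if_pos rfl]
        rw [h', hbdef, h1]; ring
    obtain ⟨Rp, hRp⟩ := ih gp hgpcard hgpb hgpsum
    obtain ⟨Rm, hRm⟩ := ih gm hgmcard hgmb hgmsum
    set c := b / (a + b) with hc
    have hab : 0 < a + b := by linarith
    have hc0 : 0 ≤ c := by positivity
    have hc1 : c ≤ 1 := by rw [hc, div_le_one hab]; linarith
    have h1c : 1 - c = a / (a + b) := by rw [hc]; field_simp; ring
    have hcombo := feasible_combo N k gp gm c hc0 hc1 Rp Rm hRp hRm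
    have hgeq : (fun t => c * gp t + (1 - c) * gm t) = g := by
      funext t
      rcases eq_or_ne t i with rfl | hti
      · simp only [hgp, hgm, if_pos rfl, h1c, hc]
        field_simp
        ring
      rcases eq_or_ne t j with rfl | htj
      · simp only [hgp, hgm, if_neg hti, if_pos rfl, if_true, h1c, hc]
        field_simp
        ring
      · simp only [hgp, hgm, if_neg hti, if_neg htj, h1c, hc]
        field_simp
        ring
    rw [hgeq] at hcombo
    exact ⟨_, hcombo⟩

lemma hypersimplex_feasible' (N k : ℕ) (g : Fin N → ℝ)
    (hb : ∀ i, 0 ≤ g i ∧ g i ≤ 1) (hsum : ∑ i, g i = (k : ℝ)) :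
    ∃ R, FeasibleDist N k g R :=
  hypersimplex_feasible N k _ g le_rfl hb hsum

lemma card_containing (N k : ℕ) (hk : 0 < k) (i : Fin N) :
    (Finset.univ.filter (fun A : Finset (Fin N) => i ∈ A ∧ A.card = k)).card
      = Nat.choose (N - 1) (k - 1) := by
  have hcard : ((Finset.univ.erase i).powersetCard (k-1)).card = (N-1).choose (k-1) := by
    rw [Finset.card_powersetCard, Finset.card_erase_of_mem (Finset.mem_univ i),
      Finset.card_univ, Fintype.card_fin]
  rw [← hcard]
  apply Finset.card_bij' (fun A _ => A.erase i) (fun B _ => insert i B)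
  · intro A hA
    exact Finset.insert_erase (Finset.mem_filter.1 hA).2.1
  · intro B hB
    rw [Finset.mem_powersetCard] at hB
    exact Finset.erase_insert (fun h => (Finset.mem_erase.1 (hB.1 h)).1 rfl)
  · intro A hA
    have hA' := (Finset.mem_filter.1 hA).2
    rw [Finset.mem_powersetCard]
    constructor
    · intro x hx
      exact Finset.mem_erase.2 ⟨(Finset.mem_erase.1 hx).1, Finset.mem_univ x⟩
    · rw [Finset.card_erase_of_mem hA'.1, hA'.2]
  · intro B hB
    rw [Finset.mem_powersetCard] at hB
    have hiB : i ∉ B := fun h => (Finset.mem_erase.1 (hB.1 h)).1 rfl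
    refine Finset.mem_filter.2 ⟨Finset.mem_univ _, Finset.mem_insert_self _ _, ?_⟩
    rw [Finset.card_insert_of_notMem hiB, hB.2]
    omega

lemma choose_ratio (N k : ℕ) (hk : 0 < k) (hkN : k ≤ N) :
    ((N-1).choose (k-1) : ℝ) / (N.choose k : ℝ) = (k : ℝ) / (N : ℝ) := by
  have hN : 0 < N := lt_of_lt_of_le hk hkN
  obtain ⟨N', rfl⟩ : ∃ N', N = N' + 1 := ⟨N - 1, by omega⟩
  obtain ⟨k', rfl⟩ : ∃ k', k = k' + 1 := ⟨k - 1, by omega⟩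
  have hid : (N'+1) * N'.choose k' = (N'+1).choose (k'+1) * (k'+1) :=
    Nat.add_one_mul_choose_eq N' k'
  have hC : 0 < (N'+1).choose (k'+1) := Nat.choose_pos hkN
  simp only [Nat.add_sub_cancel]
  rw [div_eq_div_iff (by exact_mod_cast hC.ne') (by positivity)]
  have hid' : N'.choose k' * (N'+1) = (k'+1) * ((N'+1).choose (k'+1)) := by
    rw [Nat.mul_comm, hid, Nat.mul_comm]
  exact_mod_cast hid'

lemma exists_pos_feasible (N k : ℕ) (hk0 : 0 < k) (hkN : k ≤ N) (hN : 0 < N)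
    (f : Fin N → ℝ) (hf : ∀ i, 0 < f i ∧ f i < 1) (hfk : ∑ i, f i = (k : ℝ)) :
    ∃ Q, FeasibleDist N k f Q ∧ ∀ A : Finset (Fin N), A.card = k → 0 < Q A := by
  have hne : (Finset.univ : Finset (Fin N)).Nonempty := by
    simpa [Finset.univ_nonempty_iff] using Fin.pos_iff_nonempty.1 hN
  set C : ℝ := (N.choose k : ℝ) with hC
  have hCpos : (0:ℝ) < C := by rw [hC]; exact_mod_cast Nat.choose_pos hkN
  set u : ℝ := (k : ℝ) / (N : ℝ) with hu
  have hu0 : 0 < u := by positivity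
  have hu1 : u ≤ 1 := by
    rw [hu, div_le_one (by exact_mod_cast hN)]
    exact_mod_cast hkN
  set U : Finset (Fin N) → ℝ := fun A => if A.card = k then 1 / C else 0 with hU
  have hUcount : ∀ i : Fin N,
      (∑ A : Finset (Fin N), if i ∈ A ∧ A.card = k then U A else 0) = u := by
    intro i
    have : ∀ A : Finset (Fin N), (if i ∈ A ∧ A.card = k then U A else 0)
        = if i ∈ A ∧ A.card = k then 1 / C else 0 := by
      intro A
      by_cases h : i ∈ A ∧ A.card = k
      · rw [if_pos h, if_pos h, hU]; beta_reduce; rw [if_pos h.2]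
      · rw [if_neg h, if_neg h]
    rw [Finset.sum_congr rfl (fun A _ => this A), ← Finset.sum_filter,
      Finset.sum_const, card_containing N k hk0 i, nsmul_eq_mul]
    rw [hu, ← choose_ratio N k hk0 hkN, hC]
    ring
  -- choose ε
  set ε : ℝ := (Finset.univ.inf' hne (fun i => min (f i) (1 - f i))) / 2 with hε
  obtain ⟨i₀, -, hieq⟩ := Finset.exists_mem_eq_inf' hne (fun i => min (f i) (1 - f i))
  have hεpos : 0 < ε := by
    rw [hε, hieq]
    have := (hf i₀).1
    have := (hf i₀).2
    have : 0 < min (f i₀) (1 - f i₀) := lt_min (hf i₀).1 (by linarith [(hf i₀).2])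
    linarith
  have hεle : ∀ i, ε ≤ f i ∧ ε ≤ 1 - f i := by
    intro i
    have hinf := Finset.inf'_le (fun i => min (f i) (1 - f i)) (Finset.mem_univ i)
    have h1 : Finset.univ.inf' hne (fun i => min (f i) (1 - f i)) ≤ min (f i) (1 - f i) := hinf
    constructor
    · have := min_le_left (f i) (1 - f i); rw [hε]; linarith
    · have := min_le_right (f i) (1 - f i); rw [hε]; linarith
  have hε1 : ε < 1 := by
    have := (hεle i₀).1
    have := (hf i₀).2
    linarith
  set g : Fin N → ℝ := fun i => (f i - ε * u) / (1 - ε) with hg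
  have h1ε : 0 < 1 - ε := by linarith
  have hgb : ∀ i, 0 ≤ g i ∧ g i ≤ 1 := by
    intro i
    have h1 := (hεle i).1
    have h2 := (hεle i).2
    have hεu : ε * u ≤ ε := by nlinarith
    constructor
    · apply div_nonneg _ h1ε.le
      nlinarith
    · rw [div_le_one h1ε]
      nlinarith
  have hgsum : ∑ i, g i = (k : ℝ) := by
    rw [hg]
    rw [← Finset.sum_div, Finset.sum_sub_distrib, hfk, Finset.sum_const,
      Finset.card_univ, Fintype.card_fin, nsmul_eq_mul]
    rw [hu]
    field_simp
  obtain ⟨R, hR⟩ := hypersimplex_feasible' N k g hgb hgsum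
  obtain ⟨Rpos, Rsum, Rzero, Rmarg⟩ := hR
  refine ⟨fun A => (1 - ε) * R A + ε * U A, ⟨?_, ?_, ?_, ?_⟩, ?_⟩
  · intro A
    dsimp only
    have : 0 ≤ U A := by
      rw [hU]; beta_reduce
      split <;> positivity
    nlinarith [Rpos A]
  · rw [Finset.sum_add_distrib, ← Finset.mul_sum, ← Finset.mul_sum, Rsum]
    have hUsum : ∑ A : Finset (Fin N), U A = 1 := by
      rw [hU]
      rw [← Finset.sum_filter]
      rw [Finset.sum_const, nsmul_eq_mul]
      have : (Finset.univ.filter (fun A : Finset (Fin N) => A.card = k)).card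
          = N.choose k := by
        have : Finset.univ.filter (fun A : Finset (Fin N) => A.card = k)
            = Finset.univ.powersetCard k := by
          ext A
          simp [Finset.mem_powersetCard_univ]
        rw [this, Finset.card_powersetCard, Finset.card_univ, Fintype.card_fin]
      rw [this, ← hC]
      field_simp
    rw [hUsum]
    ring
  · intro A hA
    dsimp only
    rw [Rzero A hA, hU]; beta_reduce
    rw [if_neg hA]
    ring
  · intro i
    have hsplit : ∀ A : Finset (Fin N),
        (if i ∈ A ∧ A.card = k then (1 - ε) * R A + ε * U A else 0)
        = (1 - ε) * (if i ∈ A ∧ A.card = k then R A else 0)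
          + ε * (if i ∈ A ∧ A.card = k then U A else 0) := by
      intro A
      by_cases h : i ∈ A ∧ A.card = k <;> simp [h]
    rw [Finset.sum_congr rfl (fun A _ => hsplit A), Finset.sum_add_distrib,
      ← Finset.mul_sum, ← Finset.mul_sum, Rmarg, hUcount, hg]
    field_simp
    ring
  · intro A hA
    dsimp only
    have hU' : U A = 1 / C := by rw [hU]; beta_reduce; rw [if_pos hA]
    have h2 : 0 < ε * U A := by rw [hU']; positivity
    nlinarith [mul_nonneg h1ε.le (Rpos A)]

lemma subsetEntropy_eq (N : ℕ) (P : Finset (Fin N) → ℝ) :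
    subsetEntropy N P = ∑ A : Finset (Fin N), Real.negMulLog (P A) := by
  rw [subsetEntropy, ← Finset.sum_neg_distrib]
  exact Finset.sum_congr rfl (fun A _ => by rw [Real.negMulLog]; ring)

lemma negMulLog_le_one {x : ℝ} (h0 : 0 ≤ x) (h1 : x ≤ 1) : Real.negMulLog x ≤ 1 := by
  rcases eq_or_lt_of_le h0 with rfl | hx
  · simp
  · have hinv : 0 < x⁻¹ := by positivity
    have hlog := Real.log_le_sub_one_of_pos hinv
    have hrw : Real.negMulLog x = x * Real.log x⁻¹ := by
      rw [Real.negMulLog, Real.log_inv]; ring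
    rw [hrw]
    nlinarith [mul_inv_cancel₀ hx.ne']

lemma le_one_of_feasible (N k : ℕ) (f : Fin N → ℝ) (P : Finset (Fin N) → ℝ)
    (hP : FeasibleDist N k f P) : ∀ A, P A ≤ 1 := by
  obtain ⟨Ppos, Psum, -, -⟩ := hP
  intro A
  rw [← Psum]
  exact Finset.single_le_sum (fun B _ => Ppos B) (Finset.mem_univ A)

lemma entropy_le_card (N k : ℕ) (f : Fin N → ℝ) (P : Finset (Fin N) → ℝ)
    (hP : FeasibleDist N k f P) :
    subsetEntropy N P ≤ (Fintype.card (Finset (Fin N)) : ℝ) := by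
  rw [subsetEntropy_eq]
  calc ∑ A : Finset (Fin N), Real.negMulLog (P A)
      ≤ ∑ _A : Finset (Fin N), (1:ℝ) :=
        Finset.sum_le_sum (fun A _ => negMulLog_le_one (hP.1 A) (le_one_of_feasible N k f P hP A))
    _ = (Fintype.card (Finset (Fin N)) : ℝ) := by
        rw [Finset.sum_const, Finset.card_univ, nsmul_eq_mul, mul_one]

lemma maximizer_pos (N k : ℕ) (f : Fin N → ℝ)
    (P : Finset (Fin N) → ℝ) (hP : FeasibleDist N k f P)
    (hmax : ∀ Q : Finset (Fin N) → ℝ, FeasibleDist N k f Q →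
      subsetEntropy N Q ≤ subsetEntropy N P)
    (Q : Finset (Fin N) → ℝ) (hQ : FeasibleDist N k f Q)
    (hQpos : ∀ A : Finset (Fin N), A.card = k → 0 < Q A) :
    ∀ A : Finset (Fin N), A.card = k → 0 < P A := by
  intro A₀ hA₀
  rcases lt_or_eq_of_le (hP.1 A₀) with h | h
  · exact h
  exfalso
  have hPA₀ : P A₀ = 0 := h.symm
  set Q₀ : ℝ := Q A₀ with hQ₀def
  have hQ₀ : 0 < Q₀ := hQpos A₀ hA₀
  set B : ℝ := (Fintype.card (Finset (Fin N)) : ℝ) with hB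
  have hBpos : (0:ℝ) ≤ B := by positivity
  set c : ℝ := (B + 1 + |Q₀ * Real.log Q₀|) / Q₀ with hc
  set t : ℝ := min (1/2) (Real.exp (-c)) with ht
  have ht0 : 0 < t := lt_min (by norm_num) (Real.exp_pos _)
  have ht1 : t ≤ 1/2 := min_le_left _ _
  have hlogt : Real.log t ≤ -c := by
    calc Real.log t ≤ Real.log (Real.exp (-c)) :=
          Real.log_le_log ht0 (min_le_right _ _)
      _ = -c := Real.log_exp _
  set Pt : Finset (Fin N) → ℝ := fun A => (1 - t) * P A + t * Q A with hPt
  have hPtF : FeasibleDist N k f Pt := by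
    obtain ⟨p1, s1, z1, m1⟩ := hP
    obtain ⟨p2, s2, z2, m2⟩ := hQ
    refine ⟨fun A => by rw [hPt]; beta_reduce; nlinarith [p1 A, p2 A], ?_,
      fun A hA => by rw [hPt]; beta_reduce; rw [z1 A hA, z2 A hA]; ring, ?_⟩
    · rw [hPt, Finset.sum_add_distrib, ← Finset.mul_sum, ← Finset.mul_sum, s1, s2]; ring
    · intro i
      have hsplit : ∀ A : Finset (Fin N),
          (if i ∈ A ∧ A.card = k then Pt A else 0)
          = (1 - t) * (if i ∈ A ∧ A.card = k then P A else 0)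
            + t * (if i ∈ A ∧ A.card = k then Q A else 0) := by
        intro A
        by_cases hcond : i ∈ A ∧ A.card = k <;> simp [hPt, hcond]
      rw [Finset.sum_congr rfl (fun A _ => hsplit A), Finset.sum_add_distrib,
        ← Finset.mul_sum, ← Finset.mul_sum, m1 i, m2 i]
      ring
  -- lower bound on entropy of Pt
  have hlb : ∀ A : Finset (Fin N), (if A = A₀ then Real.negMulLog (t * Q₀)
      else (1 - t) * Real.negMulLog (P A)) ≤ Real.negMulLog (Pt A) := by
    intro A
    by_cases hA : A = A₀
    · rw [if_pos hA, hA, hPt]; beta_reduce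
      rw [hPA₀]
      norm_num
      exact le_rfl
    · rw [if_neg hA]
      have hconc := Real.concaveOn_negMulLog.2 (Set.mem_Ici.2 (hP.1 A))
        (Set.mem_Ici.2 (hQ.1 A)) (by linarith : (0:ℝ) ≤ 1 - t) ht0.le (by ring)
      have hQle : Real.negMulLog (Q A) ≥ 0 :=
        Real.negMulLog_nonneg (hQ.1 A) (le_one_of_feasible N k f Q hQ A)
      have : Pt A = (1-t) • P A + t • Q A := by rw [hPt]; beta_reduce; simp [smul_eq_mul]
      rw [this]
      calc (1 - t) * Real.negMulLog (P A)
          ≤ (1-t) • Real.negMulLog (P A) + t • Real.negMulLog (Q A) := by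
            simp only [smul_eq_mul]
            nlinarith
        _ ≤ Real.negMulLog ((1-t) • P A + t • Q A) := hconc
  have hsumlb : Real.negMulLog (t * Q₀) + (1 - t) * subsetEntropy N P
      ≤ subsetEntropy N Pt := by
    rw [subsetEntropy_eq N Pt]
    have h1 : ∑ A : Finset (Fin N), (if A = A₀ then Real.negMulLog (t * Q₀)
        else (1 - t) * Real.negMulLog (P A)) ≤ ∑ A : Finset (Fin N), Real.negMulLog (Pt A) :=
      Finset.sum_le_sum (fun A _ => hlb A)
    have h2 : ∑ A : Finset (Fin N), (if A = A₀ then Real.negMulLog (t * Q₀)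
        else (1 - t) * Real.negMulLog (P A))
        = Real.negMulLog (t * Q₀) + (1 - t) * subsetEntropy N P := by
      rw [← Finset.add_sum_erase _ _ (Finset.mem_univ A₀), if_pos rfl]
      congr 1
      have h3 : ∑ A ∈ Finset.univ.erase A₀,
          (if A = A₀ then Real.negMulLog (t * Q₀) else (1 - t) * Real.negMulLog (P A))
          = ∑ A ∈ Finset.univ.erase A₀, (1 - t) * Real.negMulLog (P A) := by
        apply Finset.sum_congr rfl
        intro A hA
        rw [if_neg (Finset.ne_of_mem_erase hA)]
      rw [h3, ← Finset.mul_sum]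
      congr 1
      rw [subsetEntropy_eq]
      rw [← Finset.add_sum_erase _ _ (Finset.mem_univ A₀), hPA₀]
      simp
    linarith
  have hfinal := hmax Pt hPtF
  have hHB := entropy_le_card N k f P hP
  -- negMulLog (t * Q₀) ≥ t * (B + 1)
  have hexp : Real.negMulLog (t * Q₀) = t * Q₀ * (-Real.log t) - t * (Q₀ * Real.log Q₀) := by
    rw [Real.negMulLog, Real.log_mul ht0.ne' hQ₀.ne']
    ring
  have hkey : t * (B + 1) ≤ Real.negMulLog (t * Q₀) := by
    rw [hexp]
    have h1 : c ≤ -Real.log t := by linarith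
    have h2 : Q₀ * c = B + 1 + |Q₀ * Real.log Q₀| := by
      rw [hc]; field_simp
    have h3 : t * Q₀ * c ≤ t * Q₀ * (-Real.log t) := by
      apply mul_le_mul_of_nonneg_left h1 (by positivity)
    have h4 : t * Q₀ * c = t * (B + 1) + t * |Q₀ * Real.log Q₀| := by
      rw [mul_assoc, h2]; ring
    have h5 : -(t * (Q₀ * Real.log Q₀)) ≥ -(t * |Q₀ * Real.log Q₀|) := by
      have := le_abs_self (Q₀ * Real.log Q₀)
      nlinarith
    linarith
  nlinarith [hsumlb, hfinal, hHB, hkey, ht0]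

lemma first_order (N k : ℕ) (hk0 : 0 < k) (hkN : k ≤ N) (f : Fin N → ℝ)
    (P : Finset (Fin N) → ℝ) (hP : FeasibleDist N k f P)
    (hmax : ∀ Q : Finset (Fin N) → ℝ, FeasibleDist N k f Q →
      subsetEntropy N Q ≤ subsetEntropy N P)
    (hpos : ∀ A : Finset (Fin N), A.card = k → 0 < P A)
    (v : Finset (Fin N) → ℝ) (hv0 : ∀ A : Finset (Fin N), A.card ≠ k → v A = 0)
    (hvm : ∀ i : Fin N, ∑ A : Finset (Fin N), (if i ∈ A ∧ A.card = k then v A else 0) = 0) :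
    ∑ A : Finset (Fin N), v A * Real.log (P A) = 0 := by
  obtain ⟨Ppos, Psum, Pzero, Pmarg⟩ := hP
  set S : Finset (Finset (Fin N)) := Finset.univ.filter (fun A => A.card = k) with hS
  have hmemS : ∀ A : Finset (Fin N), A ∈ S ↔ A.card = k := by
    intro A; simp [hS]
  have hSne : S.Nonempty := by
    obtain ⟨t, -, ht⟩ := Finset.exists_subset_card_eq (s := (Finset.univ : Finset (Fin N))) (n := k)
      (by rw [Finset.card_univ, Fintype.card_fin]; exact hkN)
    exact ⟨t, (hmemS t).2 ht⟩
  -- total of v is zero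
  have hvsum : ∑ A : Finset (Fin N), v A = 0 := by
    have hswap : ∑ i : Fin N, ∑ A : Finset (Fin N),
        (if i ∈ A ∧ A.card = k then v A else 0) = 0 := by
      rw [Finset.sum_congr rfl (fun i _ => hvm i)]; simp
    rw [Finset.sum_comm] at hswap
    have hinner : ∀ A : Finset (Fin N),
        ∑ i : Fin N, (if i ∈ A ∧ A.card = k then v A else 0) = (k : ℝ) * v A := by
      intro A
      by_cases hc : A.card = k
      · have h1 : ∀ i : Fin N, (if i ∈ A ∧ A.card = k then v A else 0)
            = if i ∈ A then v A else 0 := by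
          intro i; by_cases h : i ∈ A <;> simp [h, hc]
        rw [Finset.sum_congr rfl (fun i _ => h1 i), ← Finset.sum_filter]
        have h2 : Finset.univ.filter (fun i => i ∈ A) = A := by
          ext i; simp
        rw [h2, Finset.sum_const, nsmul_eq_mul, hc]
      · have h1 : v A = 0 := hv0 A hc
        simp [hc, h1]
    rw [Finset.sum_congr rfl (fun A _ => hinner A), ← Finset.mul_sum] at hswap
    have : (k : ℝ) ≠ 0 := by exact_mod_cast hk0.ne'
    exact (mul_eq_zero.1 hswap).resolve_left this
  -- the perturbation radius
  set δ : ℝ := S.inf' hSne (fun A => P A / (|v A| + 1)) with hδ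
  have hδpos : 0 < δ := by
    rw [hδ, Finset.lt_inf'_iff]
    intro A hA
    have := hpos A ((hmemS A).1 hA)
    positivity
  have hpt : ∀ t : ℝ, |t| < δ → ∀ A ∈ S, 0 < P A + t * v A := by
    intro t ht A hA
    have hPA := hpos A ((hmemS A).1 hA)
    have hle : δ ≤ P A / (|v A| + 1) := Finset.inf'_le _ hA
    have habs : |t * v A| < P A := by
      rw [abs_mul]
      calc |t| * |v A| ≤ |t| * (|v A| + 1) := by nlinarith [abs_nonneg t, abs_nonneg (v A)]
        _ < (P A / (|v A| + 1)) * (|v A| + 1) :=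
            mul_lt_mul_of_pos_right (lt_of_lt_of_le ht hle) (by positivity)
        _ = P A := by field_simp
    have := neg_abs_le (t * v A)
    linarith [abs_le.1 habs.le]
  -- the entropy along the perturbation
  set φ : ℝ → ℝ := fun t => ∑ A ∈ S, Real.negMulLog (P A + t * v A) with hφ
  have hφeq : ∀ t : ℝ, subsetEntropy N (fun A => P A + t * v A) = φ t := by
    intro t
    rw [subsetEntropy_eq, hφ]
    beta_reduce
    rw [← Finset.sum_subset (Finset.subset_univ S)]
    intro A _ hA
    rw [Pzero A (fun h => hA ((hmemS A).2 h)), hv0 A (fun h => hA ((hmemS A).2 h))]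
    simp
  have hφ0 : φ 0 = subsetEntropy N P := by
    rw [← hφeq 0]
    congr 1
    funext A
    ring
  -- derivative of φ at 0
  set D : ℝ := ∑ A ∈ S, (-Real.log (P A) - 1) * v A with hD
  have hderiv : HasDerivAt φ D 0 := by
    rw [hφ, hD]
    apply HasDerivAt.fun_sum
    intro A hA
    have hPA : P A + 0 * v A ≠ 0 := by
      have := hpos A ((hmemS A).1 hA)
      simp only [zero_mul, add_zero]
      exact this.ne'
    have hinner : HasDerivAt (fun t : ℝ => P A + t * v A) (v A) 0 :=
      ((hasDerivAt_mul_const (v A)).const_add (P A))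
    have houter := (Real.hasDerivAt_negMulLog hPA).comp 0 hinner
    convert houter using 1
    · rfl
    · rfl
    · simp
  -- local maximality
  have hlmax : IsLocalMax φ 0 := by
    apply Filter.eventually_of_mem (Metric.ball_mem_nhds (0:ℝ) hδpos)
    intro t ht
    rw [Metric.mem_ball, Real.dist_eq, sub_zero] at ht
    rw [hφ0, ← hφeq t]
    apply hmax
    refine ⟨?_, ?_, ?_, ?_⟩
    · intro A
      beta_reduce
      by_cases hc : A.card = k
      · exact (hpt t ht A ((hmemS A).2 hc)).le
      · rw [Pzero A hc, hv0 A hc]; simp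
    · beta_reduce
      rw [Finset.sum_add_distrib, Psum, ← Finset.mul_sum, hvsum]
      ring
    · intro A hc
      beta_reduce
      rw [Pzero A hc, hv0 A hc]; simp
    · intro i
      beta_reduce
      have hsplit : ∀ A : Finset (Fin N),
          (if i ∈ A ∧ A.card = k then P A + t * v A else 0)
          = (if i ∈ A ∧ A.card = k then P A else 0)
            + t * (if i ∈ A ∧ A.card = k then v A else 0) := by
        intro A
        by_cases h : i ∈ A ∧ A.card = k <;> simp [h]
      rw [Finset.sum_congr rfl (fun A _ => hsplit A), Finset.sum_add_distrib,
        ← Finset.mul_sum, Pmarg i, hvm i]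
      ring
  have hD0 : D = 0 := hlmax.hasDerivAt_eq_zero hderiv
  -- conclude
  have hvS : ∑ A ∈ S, v A = 0 := by
    rw [← hvsum]
    apply Finset.sum_subset (Finset.subset_univ S)
    intro A _ hA
    exact hv0 A (fun h => hA ((hmemS A).2 h))
  have hexp : D = -(∑ A ∈ S, v A * Real.log (P A)) - ∑ A ∈ S, v A := by
    rw [hD, ← Finset.sum_neg_distrib, ← Finset.sum_sub_distrib]
    apply Finset.sum_congr rfl
    intro A _
    ring
  have hfin : ∑ A ∈ S, v A * Real.log (P A) = 0 := by
    rw [hexp, hvS] at hD0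
    linarith
  rw [← hfin]
  symm
  apply Finset.sum_subset (Finset.subset_univ S)
  intro A _ hA
  rw [hv0 A (fun h => hA ((hmemS A).2 h)), zero_mul]

lemma exists_lam (N k : ℕ)
    (P : Finset (Fin N) → ℝ)
    (hfoc : ∀ v : Finset (Fin N) → ℝ, (∀ A : Finset (Fin N), A.card ≠ k → v A = 0) →
      (∀ i : Fin N, ∑ A : Finset (Fin N), (if i ∈ A ∧ A.card = k then v A else 0) = 0) →
      ∑ A : Finset (Fin N), v A * Real.log (P A) = 0) :
    ∃ lam : Fin N → ℝ, ∀ A : Finset (Fin N), A.card = k →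
      Real.log (P A) = ∑ i ∈ A, lam i := by
  set K := {A : Finset (Fin N) // A.card = k} with hK
  let L : EuclideanSpace ℝ K →ₗ[ℝ] EuclideanSpace ℝ (Fin N) :=
    { toFun := fun v => WithLp.toLp 2 (fun i => ∑ A : K, v A * (if i ∈ (A : Finset (Fin N)) then (1:ℝ) else 0))
      map_add' := by
        intro x y
        ext i
        simp [add_mul, ← Finset.sum_add_distrib, ite_add_ite]
      map_smul' := by
        intro c x
        ext i
        simp [Finset.mul_sum, mul_ite, mul_zero, mul_assoc] }
  have hLapply : ∀ (v : EuclideanSpace ℝ K) (i : Fin N),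
      L v i = ∑ A : K, v A * (if i ∈ (A : Finset (Fin N)) then (1:ℝ) else 0) := fun v i => rfl
  set g : EuclideanSpace ℝ K := WithLp.toLp 2 (fun A : K => Real.log (P (A : Finset (Fin N)))) with hg
  -- g is orthogonal to ker L
  have hgperp : ∀ v : EuclideanSpace ℝ K, L v = 0 → inner (𝕜 := ℝ) v g = 0 := by
    intro v hv
    set vt : Finset (Fin N) → ℝ := fun A => if h : A.card = k then v ⟨A, h⟩ else 0 with hvt
    have hvt0 : ∀ A : Finset (Fin N), A.card ≠ k → vt A = 0 := by
      intro A hA; rw [hvt]; beta_reduce; rw [dif_neg hA]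
    have hsubty : ∀ (F : Finset (Fin N) → ℝ), (∀ A, A.card ≠ k → F A = 0) →
        ∑ A : Finset (Fin N), F A = ∑ A : K, F (A : Finset (Fin N)) := by
      intro F hF
      rw [← Finset.sum_filter_add_sum_filter_not Finset.univ (fun A => A.card = k)]
      have h2 : ∑ A ∈ Finset.univ.filter (fun A : Finset (Fin N) => ¬ A.card = k), F A = 0 :=
        Finset.sum_eq_zero (fun A hA => hF A (Finset.mem_filter.1 hA).2)
      rw [h2, add_zero]
      exact Finset.sum_subtype _ (by simp) F
    have hvmarg : ∀ i : Fin N,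
        ∑ A : Finset (Fin N), (if i ∈ A ∧ A.card = k then vt A else 0) = 0 := by
      intro i
      have hbr := hsubty (fun A => if i ∈ A ∧ A.card = k then vt A else 0)
        (fun A hA => by simp [hA])
      rw [hbr]
      have hterm : ∑ A : K, (if i ∈ (A : Finset (Fin N)) ∧ (A : Finset (Fin N)).card = k
            then vt (A : Finset (Fin N)) else 0)
          = ∑ A : K, v A * (if i ∈ (A : Finset (Fin N)) then (1:ℝ) else 0) := by
        apply Finset.sum_congr rfl
        intro A _
        have hAk : (A : Finset (Fin N)).card = k := A.2
        by_cases h : i ∈ (A : Finset (Fin N))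
        · rw [if_pos ⟨h, hAk⟩, if_pos h, mul_one, hvt]; beta_reduce
          rw [dif_pos hAk]
        · rw [if_neg (fun hc => h hc.1), if_neg h, mul_zero]
      rw [hterm, ← hLapply, hv]
      rfl
    have hfoc' := hfoc vt hvt0 hvmarg
    have hbr2 := hsubty (fun A => vt A * Real.log (P A))
      (fun A hA => by beta_reduce; rw [hvt0 A hA, zero_mul])
    rw [hbr2] at hfoc'
    rw [PiLp.inner_apply]
    rw [← hfoc']
    apply Finset.sum_congr rfl
    intro A _
    have hAk : (A : Finset (Fin N)).card = k := A.2
    rw [hvt]; beta_reduce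
    rw [dif_pos hAk, RCLike.inner_apply, conj_trivial, hg]
    exact mul_comm _ _
  -- use adjoint
  set T := LinearMap.adjoint L with hT
  have hkerT : LinearMap.ker L = (LinearMap.range T)ᗮ := by
    ext v
    rw [LinearMap.mem_ker, Submodule.mem_orthogonal]
    constructor
    · intro hv u hu
      obtain ⟨w, rfl⟩ := hu
      rw [hT, LinearMap.adjoint_inner_left, hv, inner_zero_right]
    · intro h
      have h2 := h (T (L v)) ⟨L v, rfl⟩
      rw [hT, LinearMap.adjoint_inner_left] at h2
      exact inner_self_eq_zero.1 h2
  have hgmem : g ∈ LinearMap.range T := by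
    rw [← Submodule.orthogonal_orthogonal (LinearMap.range T), ← hkerT]
    rw [Submodule.mem_orthogonal]
    intro u hu
    rw [LinearMap.mem_ker] at hu
    exact hgperp u hu
  obtain ⟨lam, hlam⟩ := hgmem
  refine ⟨lam, ?_⟩
  intro A hA
  have h1 : Real.log (P A) = g ⟨A, hA⟩ := by rw [hg]
  have h2 : T lam ⟨A, hA⟩ = ∑ i ∈ A, lam i := by
    have hs : T lam ⟨A, hA⟩
        = inner (𝕜 := ℝ) (EuclideanSpace.single (⟨A, hA⟩ : K) (1:ℝ)) (T lam) := by
      rw [EuclideanSpace.inner_single_left, conj_trivial, one_mul]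
    rw [hs, hT, LinearMap.adjoint_inner_right, PiLp.inner_apply]
    have hLs : ∀ i : Fin N, L (EuclideanSpace.single (⟨A, hA⟩ : K) (1:ℝ)) i
        = if i ∈ A then (1:ℝ) else 0 := by
      intro i
      rw [hLapply]
      rw [Finset.sum_eq_single (⟨A, hA⟩ : K)]
      · rw [EuclideanSpace.single_apply, if_pos rfl, one_mul]
      · intro B _ hB
        rw [EuclideanSpace.single_apply, if_neg hB, zero_mul]
      · intro h; exact absurd (Finset.mem_univ _) h
    rw [Finset.sum_congr rfl (fun i _ => (by simp [RCLike.inner_apply, mul_comm] : inner ℝ ((L (EuclideanSpace.single (⟨A, hA⟩ : K) (1:ℝ))).ofLp i) (lam.ofLp i) = (starRingEnd ℝ) (L (EuclideanSpace.single (⟨A, hA⟩ : K) (1:ℝ)) i) * lam i))]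
    calc ∑ i : Fin N, (starRingEnd ℝ) (L (EuclideanSpace.single (⟨A, hA⟩ : K) (1:ℝ)) i) * lam i
        = ∑ i : Fin N, (if i ∈ A then (1:ℝ) else 0) * lam i := by
          apply Finset.sum_congr rfl
          intro i _
          rw [hLs i, conj_trivial]
      _ = ∑ i ∈ A, lam i := by
          have hterm : ∀ i : Fin N,
              (if i ∈ A then (1:ℝ) else 0) * lam i = if i ∈ A then lam i else 0 := by
            intro i; by_cases h : i ∈ A <;> simp [h]
          rw [Finset.sum_congr rfl (fun i _ => hterm i), ← Finset.sum_filter]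
          congr 1
          ext i; simp
  rw [h1, ← hlam, h2]

theorem stmt_7 (N k : ℕ) (hk : k ≤ N) (f : Fin N → ℝ)
    (hf : ∀ i, 0 < f i ∧ f i < 1) (hfk : ∑ i, f i = (k : ℝ))
    (P : Finset (Fin N) → ℝ) (hP : FeasibleDist N k f P)
    (hmax : ∀ Q : Finset (Fin N) → ℝ, FeasibleDist N k f Q →
      subsetEntropy N Q ≤ subsetEntropy N P) :
    ∃ lam : Fin N → ℝ, ∀ A : Finset (Fin N), A.card = k →
      P A = Real.exp (∑ i ∈ A, lam i) /
        ∑ J ∈ Finset.univ.powersetCard k, Real.exp (∑ j ∈ J, lam j) := by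
  by_cases hN : N = 0
  · -- degenerate case: no elements, so k = 0 and the only subset is ∅
    subst hN
    have hk0 : k = 0 := Nat.le_zero.1 hk
    subst hk0
    refine ⟨fun _ => 0, ?_⟩
    intro A hA
    have hAe : A = (∅ : Finset (Fin 0)) := Finset.card_eq_zero.1 hA
    have huniv : (Finset.univ : Finset (Finset (Fin 0))) = {∅} := by
      ext B
      simp only [Finset.mem_univ, Finset.mem_singleton, true_iff]
      exact Finset.eq_empty_of_isEmpty B
    have hPe : P (∅ : Finset (Fin 0)) = 1 := by
      have := hP.2.1
      rwa [huniv, Finset.sum_singleton] at this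
    have hZ : ∑ J ∈ (Finset.univ : Finset (Fin 0)).powersetCard 0,
        Real.exp (∑ j ∈ J, (0:ℝ)) = 1 := by
      rw [Finset.powersetCard_zero]
      simp
    rw [hAe, hPe, hZ]
    simp
  · have hNpos : 0 < N := Nat.pos_of_ne_zero hN
    have hne : (Finset.univ : Finset (Fin N)).Nonempty := by
      simpa [Finset.univ_nonempty_iff] using Fin.pos_iff_nonempty.1 hNpos
    have hk0 : 0 < k := by
      by_contra h
      push_neg at h
      have hk' : k = 0 := Nat.le_zero.1 h
      have hpos : 0 < ∑ i, f i := Finset.sum_pos (fun i _ => (hf i).1) hne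
      rw [hfk, hk'] at hpos
      norm_num at hpos
    obtain ⟨Q, hQ, hQpos⟩ := exists_pos_feasible N k hk0 hk hNpos f hf hfk
    have hpos := maximizer_pos N k f P hP hmax Q hQ hQpos
    obtain ⟨lam, hlam⟩ := exists_lam N k P
      (fun v hv0 hvm => first_order N k hk0 hk f P hP hmax hpos v hv0 hvm)
    refine ⟨lam, ?_⟩
    intro A hA
    have hZ : ∑ J ∈ Finset.univ.powersetCard k, Real.exp (∑ j ∈ J, lam j) = 1 := by
      have h1 : ∀ J ∈ Finset.univ.powersetCard k, Real.exp (∑ j ∈ J, lam j) = P J := by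
        intro J hJ
        have hJk : J.card = k := Finset.mem_powersetCard_univ.1 hJ
        rw [← hlam J hJk, Real.exp_log (hpos J hJk)]
      rw [Finset.sum_congr rfl h1]
      rw [Finset.sum_subset (Finset.subset_univ _)
        (fun B _ hB => hP.2.2.1 B (fun h => hB (Finset.mem_powersetCard_univ.2 h)))]
      exact hP.2.1
    rw [hZ, div_one, ← hlam A hA, Real.exp_log (hpos A hA)]
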